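/- Let 0 < α ≤ 1, let F be a finite field, and let b distinct pairs (x_i, y_i) ∈ F × F be given. If α > sqrt(2d/b), then the number of polynomials g of degree at most d over F that satisfy g(x_i) = y_i for at least α·b of the pairs is at most 2/α. -/

import Mathlib

open Polynomial Finset

lemma rs_inter_card {F : Type*} [Field F] [DecidableEq F] {b d : ℕ}
    (pts : Fin b → F × F) (hdist : Function.Injective pts)
    {g h : Polynomial F} (hgh : g ≠ h) (hg : g.natDegree ≤ d) (hh : h.natDegree ≤ d) :
    (((Finset.univ.filter fun i : Fin b => Polynomial.eval (pts i).1 g = (pts i).2)) ∩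
     ((Finset.univ.filter fun i : Fin b => Polynomial.eval (pts i).1 h = (pts i).2))).card ≤ d := by
  classical
  have hne : g - h ≠ 0 := sub_ne_zero.mpr hgh
  have hcard : ((g - h).roots.toFinset).card ≤ d := by
    calc ((g - h).roots.toFinset).card ≤ Multiset.card (g - h).roots :=
          Multiset.toFinset_card_le _
      _ ≤ (g - h).natDegree := Polynomial.card_roots' _
      _ ≤ d := le_trans (Polynomial.natDegree_sub_le g h) (max_le hg hh)
  refine le_trans (Finset.card_le_card_of_injOn (fun i => (pts i).1) ?_ ?_) hcard
  · intro i hi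
    simp only [Finset.mem_coe, Finset.mem_inter, Finset.mem_filter, Finset.mem_univ, true_and] at hi ⊢
    simp only [Multiset.mem_toFinset, Polynomial.mem_roots hne, Polynomial.IsRoot,
      Polynomial.eval_sub]
    rw [hi.1, hi.2, sub_self]
  · intro i hi j hj hij
    simp only [Finset.coe_inter, Set.mem_inter_iff, Finset.coe_filter, Set.mem_setOf_eq,
      Finset.mem_univ, true_and] at hi hj
    apply hdist
    simp only at hij
    have : (pts i).2 = (pts j).2 := by rw [← hi.1, ← hj.1, hij]
    exact Prod.ext hij this

lemma rs_key {F : Type*} [Field F] [DecidableEq F] {b d : ℕ} (hb : 0 < b)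
    {α : ℝ} (hα0 : 0 < α) (hα1 : α ≤ 1) (hd : 2 * (d : ℝ) < α ^ 2 * b)
    (pts : Fin b → F × F) (hdist : Function.Injective pts)
    (T : Finset (Polynomial F))
    (hT : ∀ g ∈ T, g.natDegree ≤ d ∧ α * b ≤ ((Finset.univ.filter fun i : Fin b =>
                  Polynomial.eval (pts i).1 g = (pts i).2).card : ℝ)) :
    (T.card : ℝ) * α < 2 := by
  classical
  by_contra hcon
  push_neg at hcon
  set A : Polynomial F → Finset (Fin b) :=
    fun g => Finset.univ.filter fun i : Fin b => Polynomial.eval (pts i).1 g = (pts i).2 with hAdef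
  set n : Fin b → ℕ := fun i => (T.filter fun g => Polynomial.eval (pts i).1 g = (pts i).2).card
    with hndef
  set m : ℕ := T.card with hmdef
  -- m ≥ 2
  have hm2 : (2 : ℝ) ≤ (m : ℝ) := by
    have := hcon.trans (mul_le_of_le_one_right (Nat.cast_nonneg m) hα1)
    exact this
  -- double counting: ∑ card A g = ∑ n i
  have hdc : ∑ g ∈ T, (A g).card = ∑ i : Fin b, n i := by
    have h1 : ∀ g, (A g).card = ∑ i : Fin b, if Polynomial.eval (pts i).1 g = (pts i).2 then 1 else 0 := by
      intro g; exact Finset.card_filter _ _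
    have h2 : ∀ i, n i = ∑ g ∈ T, if Polynomial.eval (pts i).1 g = (pts i).2 then 1 else 0 := by
      intro i; exact Finset.card_filter _ _
    simp only [h1, h2]
    exact Finset.sum_comm
  -- sum of squares
  have hsq : ∑ i : Fin b, (n i) ^ 2 ≤ (∑ i : Fin b, n i) + m * (m - 1) * d := by
    have h2 : ∀ i, n i = ∑ g ∈ T, if Polynomial.eval (pts i).1 g = (pts i).2 then 1 else 0 := by
      intro i; exact Finset.card_filter _ _
    have hsq1 : ∑ i : Fin b, (n i) ^ 2 = ∑ g ∈ T, ∑ h ∈ T, ((A g) ∩ (A h)).card := by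
      have : ∀ i : Fin b, (n i) ^ 2 = ∑ g ∈ T, ∑ h ∈ T,
          ((if Polynomial.eval (pts i).1 g = (pts i).2 then 1 else 0) *
           (if Polynomial.eval (pts i).1 h = (pts i).2 then 1 else 0)) := by
        intro i; rw [h2, sq, Finset.sum_mul_sum]
      simp only [this]
      rw [Finset.sum_comm]
      refine Finset.sum_congr rfl fun g _ => ?_
      rw [Finset.sum_comm]
      refine Finset.sum_congr rfl fun h _ => ?_
      rw [hAdef]
      rw [← Finset.filter_and, Finset.card_filter]
      refine Finset.sum_congr rfl fun i _ => ?_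
      by_cases h1 : Polynomial.eval (pts i).1 g = (pts i).2 <;>
        by_cases h2' : Polynomial.eval (pts i).1 h = (pts i).2 <;> simp [h1, h2']
    rw [hsq1, ← hdc]
    have hbound : ∀ g ∈ T, ∑ h ∈ T, ((A g) ∩ (A h)).card ≤ (A g).card + (m - 1) * d := by
      intro g hg
      rw [← Finset.add_sum_erase _ _ hg, Finset.inter_self]
      gcongr
      calc ∑ h ∈ T.erase g, ((A g) ∩ (A h)).card ≤ ∑ h ∈ T.erase g, d := by
            refine Finset.sum_le_sum fun h hh => ?_
            rw [Finset.mem_erase] at hh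
            exact rs_inter_card pts hdist (Ne.symm hh.1) (hT g hg).1
              (hT h (hh.2)).1
        _ = (m - 1) * d := by rw [Finset.sum_const, smul_eq_mul, Finset.card_erase_of_mem hg]
    calc ∑ g ∈ T, ∑ h ∈ T, ((A g) ∩ (A h)).card ≤ ∑ g ∈ T, ((A g).card + (m - 1) * d) :=
          Finset.sum_le_sum hbound
      _ = (∑ g ∈ T, (A g).card) + m * ((m - 1) * d) := by
          rw [Finset.sum_add_distrib, Finset.sum_const, smul_eq_mul]
      _ = (∑ g ∈ T, (A g).card) + m * (m - 1) * d := by ring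
  -- Cauchy-Schwarz
  have hcs : (∑ i : Fin b, ((n i : ℝ))) ^ 2 ≤ (b : ℝ) * ∑ i : Fin b, ((n i : ℝ)) ^ 2 := by
    have := sq_sum_le_card_mul_sum_sq (s := (Finset.univ : Finset (Fin b)))
      (f := fun i => (n i : ℝ))
    simpa using this
  -- lower bound
  have hlb : (m : ℝ) * (α * (b : ℝ)) ≤ ∑ i : Fin b, ((n i : ℝ)) := by
    have : (m : ℝ) * (α * (b : ℝ)) ≤ ∑ g ∈ T, ((A g).card : ℝ) := by
      calc (m : ℝ) * (α * (b : ℝ)) = ∑ _g ∈ T, (α * (b : ℝ)) := by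
            rw [Finset.sum_const, nsmul_eq_mul]
        _ ≤ ∑ g ∈ T, ((A g).card : ℝ) := Finset.sum_le_sum fun g hg => (hT g hg).2
    calc (m : ℝ) * (α * (b : ℝ)) ≤ ∑ g ∈ T, ((A g).card : ℝ) := this
      _ = ((∑ g ∈ T, (A g).card : ℕ) : ℝ) := by rw [Nat.cast_sum]
      _ = ∑ i : Fin b, ((n i : ℝ)) := by rw [hdc, Nat.cast_sum]
  -- cast hsq to ℝ
  have hm1 : (1 : ℕ) ≤ m := by
    by_contra hc
    push_neg at hc
    interval_cases m
    · norm_num at hm2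
  have hmcast : ((m - 1 : ℕ) : ℝ) = (m : ℝ) - 1 := by
    rw [Nat.cast_sub hm1, Nat.cast_one]
  have hsqR : ∑ i : Fin b, ((n i : ℝ)) ^ 2 ≤ (∑ i : Fin b, ((n i : ℝ))) + (m : ℝ) * ((m : ℝ) - 1) * d := by
    have := (Nat.cast_le (α := ℝ)).2 hsq
    push_cast [hmcast] at this
    convert this using 2
  set x : ℝ := ∑ i : Fin b, ((n i : ℝ)) with hxdef
  have hbR : (0 : ℝ) < b := by exact_mod_cast hb
  have hx2 : x ^ 2 ≤ (b : ℝ) * x + (b : ℝ) * ((m : ℝ) * ((m : ℝ) - 1) * d) := by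
    calc x ^ 2 ≤ (b : ℝ) * ∑ i : Fin b, ((n i : ℝ)) ^ 2 := hcs
      _ ≤ (b : ℝ) * (x + (m : ℝ) * ((m : ℝ) - 1) * d) := by
          apply mul_le_mul_of_nonneg_left hsqR (le_of_lt hbR)
      _ = (b : ℝ) * x + (b : ℝ) * ((m : ℝ) * ((m : ℝ) - 1) * d) := by ring
  have hmab : 2 * (b : ℝ) ≤ (m : ℝ) * α * (b : ℝ) := by
    have := mul_le_mul_of_nonneg_right hcon (le_of_lt hbR)
    linarith
  have hxlb : (m : ℝ) * α * (b : ℝ) ≤ x := by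
    rw [hxdef]; calc (m : ℝ) * α * (b : ℝ) = (m : ℝ) * (α * (b : ℝ)) := by ring
      _ ≤ _ := hlb
  have hmono : ((m : ℝ) * α * (b : ℝ)) ^ 2 ≤ (b : ℝ) * ((m : ℝ) * α * (b : ℝ)) +
      (b : ℝ) * ((m : ℝ) * ((m : ℝ) - 1) * d) := by
    nlinarith [mul_nonneg (sub_nonneg.2 hxlb) (by linarith : (0:ℝ) ≤ x + (m : ℝ) * α * (b : ℝ) - b)]
  nlinarith [mul_pos hbR hbR, mul_pos hα0 hbR, sq_nonneg ((m:ℝ)*α - 2),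
    mul_pos (mul_pos hα0 hα0) hbR, hm2, hcon,
    mul_lt_mul_of_pos_left hd (mul_pos (mul_pos hbR (by linarith : (0:ℝ) < (m:ℝ)))
      (by linarith : (0:ℝ) < (m:ℝ) - 1))]


/-- Fractional-agreement form of the Reed–Solomon list-size bound: given `b` distinct
pairs and `α > sqrt(2d/b)` with `0 < α ≤ 1`, at most `2/α` polynomials of degree at most
`d` agree with at least an `α` fraction of the pairs. -/
theorem stmt18 {F : Type*} [Field F] [DecidableEq F] (b d : ℕ) (hb : 0 < b)
    (α : ℝ) (hα0 : 0 < α) (hα1 : α ≤ 1)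
    (hαgt : Real.sqrt (2 * d / b) < α)
    (pts : Fin b → F × F) (hdist : Function.Injective pts) :
    let S : Set (Polynomial F) :=
      {g : Polynomial F | g.natDegree ≤ d ∧
        α * b ≤ ((Finset.univ.filter fun i : Fin b =>
                  Polynomial.eval (pts i).1 g = (pts i).2).card : ℝ)}
    S.Finite ∧ (S.ncard : ℝ) ≤ 2 / α := by
  intro S
  have hbR : (0 : ℝ) < b := by exact_mod_cast hb
  have hd : 2 * (d : ℝ) < α ^ 2 * b := by
    have := (Real.sqrt_lt' hα0).1 hαgt
    rw [div_lt_iff₀ hbR] at this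
    linarith
  have key : ∀ T : Finset (Polynomial F), ↑T ⊆ S → (T.card : ℝ) * α < 2 := by
    intro T hTS
    exact rs_key hb hα0 hα1 hd pts hdist T fun g hg => hTS hg
  have hfin : S.Finite := by
    by_contra hinf
    rw [← Set.not_infinite, not_not] at hinf
    obtain ⟨T, hTS, hTcard⟩ := hinf.exists_subset_card_eq ⌈2 / α⌉₊
    have h1 := key T hTS
    rw [hTcard] at h1
    have h2 : 2 / α ≤ (⌈2 / α⌉₊ : ℝ) := Nat.le_ceil _
    rw [div_le_iff₀ hα0] at h2
    linarith
  refine ⟨hfin, ?_⟩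
  have h1 := key hfin.toFinset (by simp)
  rw [Set.ncard_eq_toFinset_card S hfin]
  rw [le_div_iff₀ hα0]
  linarith
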